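/- Let {K_α, Λ_α}_{α∈Λ} be an f.r.f.t. nested structure of K. Then for every α ∈ Λ, one has V_α ∪ C_α ⊆ ⋃_{β∈Λ_α} V_β. -/
import Mathlib


open Set

noncomputable section

/-- Points of `ℝ^d`. -/
abbrev Pt (d : ℕ) := EuclideanSpace ℝ (Fin d)

/-- `f` is a similitude: it scales all distances by some ratio `r > 0`. -/
def IsSimilitude {d : ℕ} (f : Pt d → Pt d) : Prop :=
  ∃ r : ℝ, 0 < r ∧ ∀ x y, dist (f x) (f y) = r * dist x y

/-- The levels `Λ^{(k)}_ϑ` of a nested structure: `Λ^{(0)}_ϑ = {ϑ}` and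
`Λ^{(k+1)}_ϑ = ⋃_{β ∈ Λ^{(k)}_ϑ} Λ_β`. -/
def levels {Λ : Type} (child : Λ → Set Λ) (root : Λ) : ℕ → Set Λ
  | 0 => {root}
  | k + 1 => ⋃ β ∈ levels child root k, child β

/-- The set of parents of `α`. -/
def parentSet {Λ : Type} (child : Λ → Set Λ) (α : Λ) : Set Λ := {γ | α ∈ child γ}

/-- `P^n(α)`: the set of `n`-fold parents of `α` (`P^0(α) = {α}`). -/
def parentIter {Λ : Type} (child : Λ → Set Λ) : ℕ → Λ → Set Λ
  | 0, α => {α}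
  | n + 1, α => ⋃ β ∈ parentIter child n α, parentSet child β

/-- `C_α = ⋃_{β ≠ β' ∈ Λ_α} K_β ∩ K_{β'}`. -/
def Cset {d : ℕ} {Λ : Type} (Kα : Λ → Set (Pt d)) (child : Λ → Set Λ) (α : Λ) :
    Set (Pt d) :=
  ⋃ β ∈ child α, ⋃ β' ∈ child α, ⋃ (_ : β ≠ β'), (Kα β ∩ Kα β')

/-- `α ∼ β`: there is a similitude mapping `K_α` onto `K_β`. -/
def simRel {d : ℕ} {Λ : Type} (Kα : Λ → Set (Pt d)) (α β : Λ) : Prop :=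
  ∃ f : Pt d → Pt d, IsSimilitude f ∧ f '' Kα α = Kα β

/-- The boundary `V_α = ⋃_{β∼α, β≠ϑ} φ_{β,α}(K_β ∩ ⋃_{n≥1} ⋃_{γ∈P^n(β)} C_γ)`. -/
def Vset {d : ℕ} {Λ : Type} (Kα : Λ → Set (Pt d)) (child : Λ → Set Λ)
    (φ : Λ → Λ → Pt d → Pt d) (root α : Λ) : Set (Pt d) :=
  ⋃ β, ⋃ (_ : simRel Kα β α ∧ β ≠ root),
    φ β α '' (Kα β ∩ ⋃ n, ⋃ (_ : 1 ≤ n), ⋃ γ ∈ parentIter child n β, Cset Kα child γ)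

/-- A nested structure `{K_α, Λ_α}_{α ∈ Λ}` of the (connected self-similar) set `K`:
a countable family of distinct compact connected subsets of `K`, none a singleton,
with a root `ϑ` such that `K_ϑ = K`, each `K_α` the union of its (at least two)
children, and every non-root index an offspring of the root. -/
structure NestedStructure (d : ℕ) (K : Set (Pt d)) (Λ : Type) : Type where
  Kα : Λ → Set (Pt d)
  child : Λ → Set Λ
  root : Λ
  countable : Countable Λ
  inj : Function.Injective Kα
  compact : ∀ α, IsCompact (Kα α)
  connected : ∀ α, IsConnected (Kα α)
  not_singleton : ∀ α, ¬ ∃ x, Kα α = {x}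
  subset_K : ∀ α, Kα α ⊆ K
  root_eq : Kα root = K
  child_finite : ∀ α, (child α).Finite
  child_nontrivial : ∀ α, (child α).Nontrivial
  child_union : ∀ α, Kα α = ⋃ β ∈ child α, Kα β
  offspring : ∀ α, α ≠ root → ∃ k, α ∈ levels child root k

/-- A finitely ramified of finite type (f.r.f.t.) nested structure: a nested structure
together with a coherent family of similitudes `φ_{α,β}` for equivalent indices,
satisfying (A1) finitely many `∼`-equivalence classes, (A2) compatible one-to-one
correspondence between children of equivalent indices, and (A3) all boundaries `V_α`
finite. -/
structure FRFTStructure (d : ℕ) (K : Set (Pt d)) (Λ : Type)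
    extends NestedStructure d K Λ where
  φ : Λ → Λ → Pt d → Pt d
  φ_isSim : ∀ α β, simRel Kα α β → IsSimilitude (φ α β)
  φ_maps : ∀ α β, simRel Kα α β → φ α β '' Kα α = Kα β
  φ_refl : ∀ α, φ α α = id
  φ_comp : ∀ α β γ, simRel Kα α γ → simRel Kα γ β → (φ γ β) ∘ (φ α γ) = φ α β
  A1 : (Set.range fun α => {β | simRel Kα α β}).Finite
  A2 : ∀ α α', simRel Kα α α' → ∀ β ∈ child α,
      ∃! β', β' ∈ child α' ∧ simRel Kα β β' ∧ φ β β' = φ α α'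
  A3 : ∀ α, (Vset Kα child φ root α).Finite

lemma simRel_refl' {d : ℕ} {Λ : Type} (Kα : Λ → Set (Pt d)) (α : Λ) : simRel Kα α α :=
  ⟨id, ⟨1, one_pos, by simp⟩, Set.image_id _⟩

lemma parentIter_succ_of_parent {Λ : Type} (child : Λ → Set Λ) {δ β₀ : Λ}
    (h : β₀ ∈ parentSet child δ) :
    ∀ n, parentIter child n β₀ ⊆ parentIter child (n + 1) δ := by
  intro n
  induction n with
  | zero =>
    intro γ hγ
    simp only [parentIter, Set.mem_singleton_iff] at hγ
    subst hγ
    simp only [parentIter, Set.mem_iUnion, Set.mem_singleton_iff]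
    exact ⟨δ, rfl, h⟩
  | succ n ih =>
    intro γ hγ
    rw [show parentIter child (n + 1) β₀ = ⋃ β ∈ parentIter child n β₀, parentSet child β
      from rfl, Set.mem_iUnion₂] at hγ
    obtain ⟨β, hβ, hγ⟩ := hγ
    rw [show parentIter child (n + 2) δ = ⋃ β ∈ parentIter child (n + 1) δ, parentSet child β
      from rfl, Set.mem_iUnion₂]
    exact ⟨β, ih hβ, hγ⟩

/-- **Proposition 2.3(d).** For an f.r.f.t. nested structure of a connected self-similar
set `K`, for every `α` one has `V_α ∪ C_α ⊆ ⋃_{β ∈ Λ_α} V_β`. -/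
theorem stmt4 {d N : ℕ} (hN : 2 ≤ N) (F : Fin N → Pt d → Pt d) (c : Fin N → ℝ)
    (hc : ∀ i, 0 < c i ∧ c i < 1)
    (hF : ∀ i x y, dist (F i x) (F i y) = c i * dist x y)
    (K : Set (Pt d)) (hKc : IsCompact K) (hKne : K.Nonempty)
    (hself : K = ⋃ i, F i '' K) (hconn : IsConnected K)
    {Λ : Type} (S : FRFTStructure d K Λ) (α : Λ) :
    Vset S.Kα S.child S.φ S.root α ∪ Cset S.Kα S.child α
      ⊆ ⋃ β ∈ S.child α, Vset S.Kα S.child S.φ S.root β := by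
  have child_ne_root : ∀ {β₀ δ : Λ}, δ ∈ S.child β₀ → β₀ ≠ S.root → δ ≠ S.root := by
    intro β₀ δ hδ hβ₀ hδr
    apply hβ₀
    have h1 : S.Kα δ ⊆ S.Kα β₀ := by
      rw [S.child_union β₀]
      exact Set.subset_biUnion_of_mem hδ
    have h2 : S.Kα β₀ ⊆ S.Kα δ := by
      rw [hδr, S.root_eq]
      exact S.subset_K β₀
    have : S.Kα β₀ = S.Kα δ := le_antisymm h2 h1
    rw [S.inj this, hδr]
  -- membership in Vset helper
  have memV : ∀ (β₀ α' : Λ) (x : Pt d), simRel S.Kα β₀ α' → β₀ ≠ S.root →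
      ∀ y, y ∈ S.Kα β₀ → (∃ n, 1 ≤ n ∧ ∃ γ ∈ parentIter S.child n β₀,
        S.φ β₀ α' y = x ∧ y ∈ Cset S.Kα S.child γ) →
      x ∈ Vset S.Kα S.child S.φ S.root α' := by
    intro β₀ α' x hsim hne y hy ⟨n, hn, γ, hγ, hx, hyC⟩
    simp only [Vset, Set.mem_iUnion]
    refine ⟨β₀, ⟨hsim, hne⟩, y, ⟨hy, ?_⟩, ?_⟩
    · simp only [Set.mem_iUnion]
      exact ⟨n, hn, γ, hγ, hyC⟩
    · exact hx
  rintro x (hx | hx)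
  · -- x ∈ V_α
    simp only [Vset, Set.mem_iUnion] at hx
    obtain ⟨β₀, ⟨hsim, hne⟩, y, ⟨hyK, hyU⟩, hxy⟩ := hx
    simp only [Set.mem_iUnion] at hyU
    obtain ⟨n, hn, γ, hγ, hyC⟩ := hyU
    -- y lies in some child δ of β₀
    have : y ∈ ⋃ δ ∈ S.child β₀, S.Kα δ := by rw [← S.child_union β₀]; exact hyK
    simp only [Set.mem_iUnion] at this
    obtain ⟨δ, hδ, hyδ⟩ := this
    obtain ⟨δ', ⟨hδ'c, hδsim, hφeq⟩, _⟩ := S.A2 β₀ α hsim δ hδ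
    simp only [Set.mem_iUnion]
    refine ⟨δ', hδ'c, memV δ δ' x hδsim (child_ne_root hδ hne) y hyδ
      ⟨n + 1, le_add_self, γ, parentIter_succ_of_parent S.child hδ n hγ, ?_, hyC⟩⟩
    rw [hφeq]; exact hxy
  · -- x ∈ C_α
    simp only [Cset, Set.mem_iUnion] at hx
    obtain ⟨β, hβ, β', hβ', hne, hxβ, hxβ'⟩ := hx
    -- pick the non-root one among β, β'
    rcases eq_or_ne β S.root with hr | hr
    · have hβ'r : β' ≠ S.root := fun h => hne (hr.trans h.symm)
      simp only [Set.mem_iUnion]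
      refine ⟨β', hβ', memV β' β' x (simRel_refl' _ _) hβ'r x hxβ'
        ⟨1, le_refl 1, α, ?_, ?_, ?_⟩⟩
      · simp only [parentIter, Set.mem_iUnion, Set.mem_singleton_iff]
        exact ⟨β', rfl, hβ'⟩
      · simp [S.φ_refl]
      · simp only [Cset, Set.mem_iUnion]
        exact ⟨β, hβ, β', hβ', hne, hxβ, hxβ'⟩
    · simp only [Set.mem_iUnion]
      refine ⟨β, hβ, memV β β x (simRel_refl' _ _) hr x hxβ
        ⟨1, le_refl 1, α, ?_, ?_, ?_⟩⟩
      · simp only [parentIter, Set.mem_iUnion, Set.mem_singleton_iff]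
        exact ⟨β, rfl, hβ⟩
      · simp [S.φ_refl]
      · simp only [Cset, Set.mem_iUnion]
        exact ⟨β, hβ, β', hβ', hne, hxβ, hxβ'⟩
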